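/- Let n ≥ 3 be an integer and let χ, ψ : (0,π) → ℝ be differentiable functions satisfying the coupled system χ′(θ) = −(n+1)·(cos θ / sin θ)·χ(θ) + (1/sin θ)·ψ(θ) and ψ′(θ) = −(n+1)·(cos θ / sin θ)·ψ(θ) + (1/sin θ)·χ(θ) for all θ ∈ (0,π). If ∫₀^π (χ(θ)² + ψ(θ)²)·sinⁿ(θ) dθ < ∞, then χ and ψ are both identically zero. -/

import Mathlib

open Real MeasureTheory

open Set in
lemma keyu (n : ℕ) (hn : 3 ≤ n) (u : ℝ → ℝ)
    (hu : ∀ θ ∈ Set.Ioo (0:ℝ) π, HasDerivAt u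
      (-((n:ℝ)+1) * (cos θ / sin θ) * u θ + u θ / sin θ) θ)
    (hint : IntegrableOn (fun θ => u θ ^ 2 * sin θ ^ n) (Set.Ioo 0 π)) :
    ∀ θ ∈ Set.Ioo (0:ℝ) π, u θ = 0 := by
  set F : ℝ → ℝ := fun θ => u θ * (sin θ ^ (n+2) / (1 - cos θ)) with hFdef
  have hF : ∀ θ ∈ Set.Ioo (0:ℝ) π, HasDerivAt F 0 θ := by
    intro θ hθ
    have hs : 0 < sin θ := sin_pos_of_pos_of_lt_pi hθ.1 hθ.2
    have h1 : (0:ℝ) < 1 - cos θ := by nlinarith [sin_sq_add_cos_sq θ]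
    have hnum : HasDerivAt (fun x => sin x ^ (n+2)) (((n:ℝ)+2) * sin θ ^ (n+1) * cos θ) θ := by
      have := (hasDerivAt_sin θ).fun_pow (n+2)
      simpa [mul_comm, mul_assoc] using this
    have hden : HasDerivAt (fun x => 1 - cos x) (sin θ) θ := by
      simpa using (hasDerivAt_cos θ).const_sub 1
    have hg := hnum.div hden h1.ne'
    have hmul := (hu θ hθ).mul hg
    refine hmul.congr_deriv (Eq.symm ?_)
    have hs2 : sin θ ^ 2 = 1 - cos θ ^ 2 := sin_sq θ
    simp only [Pi.div_apply]
    field_simp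
    linear_combination (u θ * Real.sin θ ^ n * Real.sin θ ^ 2) * hs2
  have hmem : π/2 ∈ Set.Ioo (0:ℝ) π := ⟨by positivity, by linarith [pi_pos]⟩
  have hconst : ∀ θ ∈ Set.Ioo (0:ℝ) π, F θ = F (π/2) := by
    intro θ hθ
    refine (convex_Ioo (0:ℝ) π).is_const_of_fderivWithin_eq_zero
      (fun x hx => ((hF x hx).differentiableAt).differentiableWithinAt) ?_ hθ hmem
    intro x hx
    rw [fderivWithin_of_isOpen isOpen_Ioo hx, (hF x hx).hasFDerivAt.fderiv]
    ext; simp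
  set c : ℝ := F (π/2) with hc
  have hu_eq : ∀ θ ∈ Set.Ioo (0:ℝ) π, u θ = c * (1 - cos θ) / sin θ ^ (n+2) := by
    intro θ hθ
    have hs : 0 < sin θ := sin_pos_of_pos_of_lt_pi hθ.1 hθ.2
    have h1 : (0:ℝ) < 1 - cos θ := by nlinarith [sin_sq_add_cos_sq θ]
    have := hconst θ hθ
    rw [hFdef] at this
    field_simp at this ⊢
    linarith [this]
  by_cases hc0 : c = 0
  · intro θ hθ
    rw [hu_eq θ hθ, hc0]; ring
  · exfalso
    set K : ℝ := c^2 * (2/π^2)^2 with hK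
    have hKpos : 0 < K := by
      have := pi_pos
      positivity
    have hbound : ∀ θ ∈ Set.Ioo (0:ℝ) π, K * θ ^ (-(n:ℝ)) ≤ u θ ^ 2 * sin θ ^ n := by
      intro θ hθ
      have hθ0 : 0 < θ := hθ.1
      have hs : 0 < sin θ := sin_pos_of_pos_of_lt_pi hθ.1 hθ.2
      have h1 : (0:ℝ) < 1 - cos θ := by nlinarith [sin_sq_add_cos_sq θ]
      have hcos : 1 - cos θ ≥ 2/π^2 * θ^2 := by
        have := cos_le_one_sub_mul_cos_sq (x := θ) (by rw [abs_of_pos hθ0]; exact hθ.2.le)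
        linarith
      have hsin : sin θ ≤ θ := Real.sin_le hθ0.le
      have h2 : u θ ^ 2 * sin θ ^ n = c^2 * (1 - cos θ)^2 / sin θ ^ (n+4) := by
        rw [hu_eq θ hθ]
        field_simp
        ring
      have h3 : θ ^ (-(n:ℝ)) = θ ^ (4:ℕ) / θ ^ (n+4 : ℕ) := by
        rw [eq_div_iff (by positivity), ← Real.rpow_natCast θ 4, ← Real.rpow_natCast θ (n+4),
          ← Real.rpow_add hθ0]
        norm_num
      rw [h2, h3, hK,
        show c ^ 2 * (2 / π ^ 2) ^ 2 * (θ ^ 4 / θ ^ (n + 4))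
          = (c ^ 2 * (2 / π ^ 2) ^ 2 * θ ^ 4) / θ ^ (n + 4) from by ring,
        div_le_div_iff₀ (by positivity) (by positivity)]
      have hsp : sin θ ^ (n+4) ≤ θ ^ (n+4) := by
        exact pow_le_pow_left₀ hs.le hsin _
      have hcc : (2/π^2 * θ^2)^2 ≤ (1 - cos θ)^2 := by
        apply pow_le_pow_left₀ (by positivity) hcos
      calc c ^ 2 * (2 / π ^ 2) ^ 2 * θ ^ 4 * sin θ ^ (n + 4)
          ≤ c ^ 2 * (2 / π ^ 2) ^ 2 * θ ^ 4 * θ ^ (n + 4) := by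
            apply mul_le_mul_of_nonneg_left hsp (by positivity)
        _ = c ^ 2 * (2/π^2 * θ^2)^2 * θ ^ (n+4) := by ring
        _ ≤ c ^ 2 * (1 - cos θ)^2 * θ ^ (n + 4) := by
            apply mul_le_mul_of_nonneg_right (mul_le_mul_of_nonneg_left hcc (by positivity))
              (by positivity)
    have hKint : IntegrableOn (fun θ => K * θ ^ (-(n:ℝ))) (Set.Ioo 0 π) := by
      refine hint.mono' ?_ ?_
      · exact (((measurable_id.pow_const _).const_mul K).aestronglyMeasurable)
      · rw [ae_restrict_iff' measurableSet_Ioo]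
        filter_upwards with θ hθ
        have h := hbound θ hθ
        have hθ0 : 0 < θ := hθ.1
        have hKt : 0 ≤ K * θ ^ (-(n:ℝ)) := by positivity
        calc ‖K * θ ^ (-(n:ℝ))‖ = K * θ ^ (-(n:ℝ)) := by
              rw [Real.norm_eq_abs, abs_of_nonneg hKt]
          _ ≤ u θ ^ 2 * sin θ ^ n := h
    have hrint : IntegrableOn (fun θ => θ ^ (-(n:ℝ))) (Set.Ioo 0 π) := by
      have := hKint.const_mul K⁻¹
      refine IntegrableOn.congr_fun this ?_ measurableSet_Ioo
      intro x hx
      field_simp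
    rw [intervalIntegral.integrableOn_Ioo_rpow_iff pi_pos] at hrint
    have : (3:ℝ) ≤ n := by exact_mod_cast hn
    linarith

/-- Any solution of the coupled ODE system
`χ' = -(n+1)(cos/sin)χ + ψ/sin`, `ψ' = -(n+1)(cos/sin)ψ + χ/sin` on `(0,π)`
whose energy is integrable against `sinⁿ` vanishes identically. -/
theorem coupled_system_trivial (n : ℕ) (hn : 3 ≤ n) (χ ψ : ℝ → ℝ)
    (hχ : ∀ θ ∈ Set.Ioo (0 : ℝ) π, HasDerivAt χ
        (-((n : ℝ) + 1) * (cos θ / sin θ) * χ θ + ψ θ / sin θ) θ)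
    (hψ : ∀ θ ∈ Set.Ioo (0 : ℝ) π, HasDerivAt ψ
        (-((n : ℝ) + 1) * (cos θ / sin θ) * ψ θ + χ θ / sin θ) θ)
    (hint : IntegrableOn (fun θ => (χ θ ^ 2 + ψ θ ^ 2) * sin θ ^ n) (Set.Ioo 0 π)) :
    ∀ θ ∈ Set.Ioo (0 : ℝ) π, χ θ = 0 ∧ ψ θ = 0 := by
  set u : ℝ → ℝ := fun θ => χ θ + ψ θ with hu_def
  set v : ℝ → ℝ := fun θ => χ θ - ψ θ with hv_def
  -- measurability of χ, ψ on the interval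
  have hχc : ContinuousOn χ (Set.Ioo 0 π) := fun x hx =>
    ((hχ x hx).continuousAt).continuousWithinAt
  have hψc : ContinuousOn ψ (Set.Ioo 0 π) := fun x hx =>
    ((hψ x hx).continuousAt).continuousWithinAt
  have hsinc : ContinuousOn (fun θ : ℝ => sin θ ^ n) (Set.Ioo 0 π) :=
    (continuous_sin.pow n).continuousOn
  -- integrability of the u-energy
  have hint2 : IntegrableOn (fun θ => 2 * ((χ θ ^ 2 + ψ θ ^ 2) * sin θ ^ n)) (Set.Ioo 0 π) :=
    hint.const_mul 2
  have hmono : ∀ (f : ℝ → ℝ), ContinuousOn f (Set.Ioo 0 π) →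
      (∀ θ ∈ Set.Ioo (0:ℝ) π, f θ ^ 2 ≤ 2 * (χ θ ^ 2 + ψ θ ^ 2)) →
      IntegrableOn (fun θ => f θ ^ 2 * sin θ ^ n) (Set.Ioo 0 π) := by
    intro f hf hb
    refine hint2.mono' (((hf.pow 2).mul hsinc).aestronglyMeasurable measurableSet_Ioo) ?_
    rw [ae_restrict_iff' measurableSet_Ioo]
    filter_upwards with θ hθ
    have hs : 0 ≤ sin θ := (sin_pos_of_pos_of_lt_pi hθ.1 hθ.2).le
    have h1 : 0 ≤ f θ ^ 2 * sin θ ^ n := by positivity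
    rw [Real.norm_eq_abs, abs_of_nonneg h1]
    have := hb θ hθ
    nlinarith [pow_nonneg hs n, sq_nonneg (f θ)]
  have hintu : IntegrableOn (fun θ => u θ ^ 2 * sin θ ^ n) (Set.Ioo 0 π) :=
    hmono u (hχc.add hψc) (fun θ _ => by simp only [hu_def]; nlinarith [sq_nonneg (χ θ - ψ θ)])
  have hintv : IntegrableOn (fun θ => v θ ^ 2 * sin θ ^ n) (Set.Ioo 0 π) :=
    hmono v (hχc.sub hψc) (fun θ _ => by simp only [hv_def]; nlinarith [sq_nonneg (χ θ + ψ θ)])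
  -- u satisfies the "+" system
  have hu : ∀ θ ∈ Set.Ioo (0:ℝ) π, HasDerivAt u
      (-((n:ℝ)+1) * (cos θ / sin θ) * u θ + u θ / sin θ) θ := by
    intro θ hθ
    have := (hχ θ hθ).add (hψ θ hθ)
    refine this.congr_deriv (Eq.symm ?_)
    simp only [hu_def]
    ring
  have hu0 := keyu n hn u hu hintu
  -- w θ = v (π - θ) satisfies the "+" system
  set w : ℝ → ℝ := fun θ => v (π - θ) with hw_def
  have hw : ∀ θ ∈ Set.Ioo (0:ℝ) π, HasDerivAt w
      (-((n:ℝ)+1) * (cos θ / sin θ) * w θ + w θ / sin θ) θ := by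
    intro θ hθ
    have hmem : π - θ ∈ Set.Ioo (0:ℝ) π := ⟨by linarith [hθ.2], by linarith [hθ.1]⟩
    have hlin : HasDerivAt (fun x : ℝ => π - x) (-1) θ := by
      simpa using (hasDerivAt_id θ).const_sub π
    have hv' := (hχ _ hmem).sub (hψ _ hmem)
    have := (hv'.comp θ hlin)
    refine this.congr_deriv (Eq.symm ?_)
    simp only [hw_def, hv_def, Real.cos_pi_sub, Real.sin_pi_sub]
    ring
  -- integrability of the w-energy via reflection
  have hintw : IntegrableOn (fun θ => w θ ^ 2 * sin θ ^ n) (Set.Ioo 0 π) := by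
    have hII : IntervalIntegrable (fun θ => v θ ^ 2 * sin θ ^ n) volume 0 π :=
      (intervalIntegrable_iff_integrableOn_Ioo_of_le pi_pos.le).2 hintv
    have := (hII.comp_sub_left π).symm
    rw [sub_zero, sub_self] at this
    have h2 := (intervalIntegrable_iff_integrableOn_Ioo_of_le pi_pos.le).1 this
    refine h2.congr_fun ?_ measurableSet_Ioo
    intro x hx
    simp [hw_def, Real.sin_pi_sub]
  have hw0 := keyu n hn w hw hintw
  -- conclude
  intro θ hθ
  have hmem : π - θ ∈ Set.Ioo (0:ℝ) π := ⟨by linarith [hθ.2], by linarith [hθ.1]⟩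
  have h1 : u θ = 0 := hu0 θ hθ
  have h2 : v θ = 0 := by
    have := hw0 (π - θ) hmem
    simpa [hw_def] using this
  simp only [hu_def] at h1
  simp only [hv_def] at h2
  constructor <;> linarith
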